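/- Let 1 ≤ k₁ < ⋯ < k_s be integers, let r = ⌊log₂(k_s)⌋ + 1, and define a_n = Σ_{l=0}^{n} (-1)^{C(l,k₁)+⋯+C(l,k_s)} C(n,l). Then lim_{n→∞} a_n / 2ⁿ = c₀(k₁,…,k_s), where c₀(k₁,…,k_s) = (1/2^r) Σ_{l=0}^{2^r−1} (-1)^{C(l,k₁)+⋯+C(l,k_s)}. -/

import Mathlib

open Finset Complex Filter

private lemma neg_one_pow_congr' {a b : ℕ} (h : (a : ZMod 2) = (b : ZMod 2)) :
    (-1 : ℂ) ^ a = (-1 : ℂ) ^ b := by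
  have h2 : a % 2 = b % 2 := (ZMod.natCast_eq_natCast_iff a b 2).mp h
  conv_lhs => rw [← Nat.div_add_mod a 2]
  conv_rhs => rw [← Nat.div_add_mod b 2]
  rw [pow_add, pow_add, pow_mul, pow_mul]
  simp [h2]

private lemma abs_one_add_lt {z : ℂ} (hz : ‖z‖ = 1) (h1 : z ≠ 1) :
    ‖1 + z‖ < 2 := by
  have hnsq : Complex.normSq z = 1 := by
    rw [← Complex.sq_norm, hz]; norm_num
  have hre : z.re < 1 := by
    rcases lt_or_eq_of_le (Complex.re_le_norm z) with h | h
    · rw [hz] at h; exact h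
    · exfalso
      apply h1
      have hre1 : z.re = 1 := by rw [h, hz]
      have him : z.im = 0 := by
        have hsum : z.re ^ 2 + z.im ^ 2 = 1 := by
          have := hnsq; rw [Complex.normSq_apply] at this; nlinarith
        nlinarith
      exact Complex.ext hre1 (by simp [him])
  have hsq : ‖1 + z‖ ^ 2 = 2 + 2 * z.re := by
    rw [Complex.sq_norm, Complex.normSq_add]
    simp [hnsq, Complex.normSq_one]
    ring
  nlinarith [norm_nonneg (1 + z)]

theorem binomial_sum_asymptotic
    (s : ℕ) (hs : 0 < s) (k : Fin s → ℕ)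
    (hk1 : 1 ≤ k ⟨0, hs⟩) (hmono : StrictMono k)
    (r : ℕ) (hr : r = Nat.log 2 (k ⟨s - 1, Nat.sub_lt hs one_pos⟩) + 1)
    (a : ℕ → ℤ)
    (ha : ∀ n : ℕ, a n =
      ∑ l ∈ Finset.range (n + 1),
        (-1 : ℤ) ^ (∑ i : Fin s, Nat.choose l (k i)) * (n.choose l : ℤ))
    (c₀ : ℝ)
    (hc₀ : c₀ = (1 / 2 ^ r : ℝ) *
      ∑ l ∈ Finset.range (2 ^ r), (-1 : ℝ) ^ (∑ i : Fin s, Nat.choose l (k i))) :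
    Filter.Tendsto (fun n : ℕ => (a n : ℝ) / 2 ^ n) Filter.atTop (nhds c₀) := by
  classical
  set m : ℕ := 2 ^ r with hm
  have hm0 : m ≠ 0 := by positivity
  have hmpos : 0 < m := Nat.pos_of_ne_zero hm0
  have hmC : (m : ℂ) ≠ 0 := Nat.cast_ne_zero.mpr hm0
  -- each k i is < m
  have hkm : ∀ i, k i < m := by
    intro i
    have h1 : k i ≤ k ⟨s - 1, Nat.sub_lt hs one_pos⟩ := by
      apply hmono.monotone
      exact Fin.mk_le_mk.mpr (Nat.le_sub_one_of_lt i.isLt)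
    calc k i ≤ k ⟨s - 1, Nat.sub_lt hs one_pos⟩ := h1
      _ < 2 ^ (Nat.log 2 (k ⟨s - 1, Nat.sub_lt hs one_pos⟩) + 1) :=
          Nat.lt_pow_succ_log_self (by norm_num) _
      _ = m := by rw [hm, hr]
  -- the sign function
  set e : ℕ → ℕ := fun l => ∑ i : Fin s, Nat.choose l (k i) with he
  set f : ℕ → ℂ := fun l => (-1 : ℂ) ^ (e l) with hf
  -- choose parity under adding m
  have hchoose : ∀ (l K : ℕ), K < m →
      ((Nat.choose (l + m) K : ZMod 2) = (Nat.choose l K : ZMod 2)) := by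
    intro l K hK
    rw [Nat.add_choose_eq]
    push_cast
    rw [Finset.sum_eq_single (K, 0)]
    · simp
    · rintro ⟨b1, b2⟩ hb hne
      rw [Finset.HasAntidiagonal.mem_antidiagonal] at hb
      have hb2 : b2 ≠ 0 := by
        intro h; apply hne; simp [h] at hb ⊢; omega
      have hb2m : b2 ≠ m := by
        intro h; subst h; omega
      have hdvd : (2 : ℕ) ∣ m.choose b2 := Nat.Prime.dvd_choose_pow Nat.prime_two hb2 hb2m
      have hzero : ((m.choose b2 : ℕ) : ZMod 2) = 0 :=
        (ZMod.natCast_eq_zero_iff _ _).mpr hdvd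
      rw [hzero, mul_zero]
    · intro h
      exfalso; apply h; simp [Finset.mem_antidiagonal]
  -- f is m-periodic
  have hfper : ∀ l, f (l + m) = f l := by
    intro l
    apply neg_one_pow_congr'
    rw [he]
    push_cast
    exact Finset.sum_congr rfl fun i _ => hchoose l (k i) (hkm i)
  have hfadd : ∀ q t, f (t + q * m) = f t := by
    intro q
    induction q with
    | zero => simp
    | succ q ih => intro t; rw [Nat.succ_mul, ← add_assoc, hfper, ih]
  have hfmod : ∀ l, f l = f (l % m) := by
    intro l
    conv_lhs => rw [← Nat.mod_add_div' l m]
    exact hfadd _ _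
  -- primitive root
  set ω : ℂ := Complex.exp (2 * Real.pi * Complex.I / m) with hωdef
  have hω : IsPrimitiveRoot ω m := Complex.isPrimitiveRoot_exp m hm0
  have hωm : ω ^ m = 1 := hω.pow_eq_one
  have hω0 : ω ≠ 0 := hω.ne_zero hm0
  have hωabs : ‖ω‖ = 1 := by
    have := Complex.norm_eq_one_of_pow_eq_one hωm hm0
    exact this
  have hωl_mod : ∀ l, ω ^ l = ω ^ (l % m) := by
    intro l
    conv_lhs => rw [← Nat.mod_add_div l m]
    rw [pow_add, pow_mul, hωm, one_pow, mul_one]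
  -- Fourier coefficients
  set c : ℕ → ℂ := fun j => (1 / m : ℂ) * ∑ t ∈ range m, f t * ((ω ^ j)⁻¹) ^ t with hc
  have hpow : ∀ j t l : ℕ, ((ω ^ j)⁻¹) ^ t * (ω ^ j) ^ l = (ω ^ l * (ω ^ t)⁻¹) ^ j := by
    intro j t l
    rw [mul_pow, inv_pow, inv_pow, ← pow_mul, ← pow_mul, ← pow_mul, ← pow_mul,
      mul_comm j t, mul_comm j l]
    ring
  -- inversion formula
  have key : ∀ l, ∑ j ∈ range m, c j * (ω ^ j) ^ l = f l := by
    intro l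
    have hlm : l % m < m := Nat.mod_lt l hmpos
    calc ∑ j ∈ range m, c j * (ω ^ j) ^ l
        = ∑ j ∈ range m, ∑ t ∈ range m,
            (1 / m : ℂ) * (f t * (ω ^ l * (ω ^ t)⁻¹) ^ j) := by
          refine Finset.sum_congr rfl fun j _ => ?_
          rw [hc]
          dsimp only
          rw [mul_assoc, Finset.sum_mul, Finset.mul_sum]
          refine Finset.sum_congr rfl fun t _ => ?_
          rw [mul_assoc, hpow]
      _ = ∑ t ∈ range m, ∑ j ∈ range m,
            (1 / m : ℂ) * (f t * (ω ^ l * (ω ^ t)⁻¹) ^ j) := Finset.sum_comm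
      _ = ∑ t ∈ range m,
            (1 / m : ℂ) * (f t * ∑ j ∈ range m, (ω ^ l * (ω ^ t)⁻¹) ^ j) := by
          refine Finset.sum_congr rfl fun t _ => ?_
          rw [Finset.mul_sum, Finset.mul_sum]
      _ = (1 / m : ℂ) * (f (l % m) * m) := by
          rw [Finset.sum_eq_single_of_mem (l % m) (Finset.mem_range.mpr hlm)]
          · have h1 : ω ^ l * (ω ^ (l % m))⁻¹ = 1 := by
              rw [hωl_mod l, mul_inv_cancel₀ (pow_ne_zero _ hω0)]
            rw [h1]
            simp
          · intro t ht hne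
            have htm := Finset.mem_range.mp ht
            have hζ1 : ω ^ l * (ω ^ t)⁻¹ ≠ 1 := by
              intro h
              rw [mul_inv_eq_one₀ (pow_ne_zero _ hω0)] at h
              rw [hωl_mod l] at h
              exact hne (hω.pow_inj hlm htm h).symm
            have hζm : (ω ^ l * (ω ^ t)⁻¹) ^ m = 1 := by
              rw [mul_pow, inv_pow, ← pow_mul, ← pow_mul, mul_comm l m, mul_comm t m,
                pow_mul, pow_mul, hωm, one_pow, one_pow]
              simp
            have hz : ∑ j ∈ range m, (ω ^ l * (ω ^ t)⁻¹) ^ j = 0 := by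
              rw [geom_sum_eq hζ1, hζm]
              simp
            rw [hz]
            simp
      _ = f l := by
          rw [← hfmod]
          field_simp
  -- the main identity: a n = Σ_j c j (1 + ω^j)^n
  have hA : ∀ n, (a n : ℂ) = ∑ j ∈ range m, c j * (1 + ω ^ j) ^ n := by
    intro n
    have h1 : (a n : ℂ) = ∑ l ∈ range (n + 1), f l * (n.choose l : ℂ) := by
      rw [ha n]
      push_cast
      rfl
    rw [h1]
    calc ∑ l ∈ range (n + 1), f l * (n.choose l : ℂ)
        = ∑ l ∈ range (n + 1), (∑ j ∈ range m, c j * (ω ^ j) ^ l) * (n.choose l : ℂ) := by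
          refine Finset.sum_congr rfl fun l _ => ?_
          rw [key l]
      _ = ∑ l ∈ range (n + 1), ∑ j ∈ range m,
            c j * ((ω ^ j) ^ l * (n.choose l : ℂ)) := by
          refine Finset.sum_congr rfl fun l _ => ?_
          rw [Finset.sum_mul]
          exact Finset.sum_congr rfl fun j _ => by ring
      _ = ∑ j ∈ range m, ∑ l ∈ range (n + 1),
            c j * ((ω ^ j) ^ l * (n.choose l : ℂ)) := Finset.sum_comm
      _ = ∑ j ∈ range m, c j * (1 + ω ^ j) ^ n := by
          refine Finset.sum_congr rfl fun j _ => ?_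
          rw [← Finset.mul_sum]
          congr 1
          rw [add_comm (1 : ℂ) (ω ^ j), add_pow]
          refine Finset.sum_congr rfl fun l _ => ?_
          rw [one_pow, mul_one]
  -- convergence of the Fourier expansion
  have hTC : Tendsto (fun n : ℕ => ∑ j ∈ range m, c j * ((1 + ω ^ j) / 2) ^ n)
      atTop (nhds (c 0)) := by
    have hsum : c 0 = ∑ j ∈ range m, (if j = 0 then c 0 else 0) := by
      rw [Finset.sum_ite_eq' (range m) 0 (fun _ => c 0)]
      simp [Finset.mem_range, hmpos]
    rw [hsum]
    refine tendsto_finset_sum _ fun j hj => ?_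
    have hjm := Finset.mem_range.mp hj
    by_cases hj0 : j = 0
    · subst hj0
      simp only [if_pos rfl]
      have hval : (1 + ω ^ 0) / 2 = 1 := by norm_num
      simp only [hval, one_pow, mul_one]
      exact tendsto_const_nhds
    · simp only [if_neg hj0]
      have hne1 : ω ^ j ≠ 1 := by
        intro hcon
        have hdvd := (hω.pow_eq_one_iff_dvd j).mp hcon
        have := Nat.le_of_dvd (Nat.pos_of_ne_zero hj0) hdvd
        omega
      have habsj : ‖ω ^ j‖ = 1 := by
        rw [norm_pow, hωabs, one_pow]
      have hlt : ‖(1 + ω ^ j) / 2‖ < 1 := by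
        rw [norm_div]
        have h2 : ‖(2 : ℂ)‖ = 2 := by norm_num
        rw [h2, div_lt_one (by norm_num)]
        exact abs_one_add_lt habsj hne1
      have h0 := tendsto_pow_atTop_nhds_zero_of_norm_lt_one hlt
      simpa using h0.const_mul (c j)
  have hTC' : Tendsto (fun n : ℕ => (a n : ℂ) / 2 ^ n) atTop (nhds (c 0)) := by
    have heq : (fun n : ℕ => (a n : ℂ) / 2 ^ n)
        = fun n => ∑ j ∈ range m, c j * ((1 + ω ^ j) / 2) ^ n := by
      funext n
      rw [hA n, Finset.sum_div]
      refine Finset.sum_congr rfl fun j _ => ?_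
      rw [div_pow, mul_div_assoc]
    rw [heq]
    exact hTC
  -- identify the limit
  have hc0 : c 0 = (c₀ : ℂ) := by
    rw [hc₀, hc]
    dsimp only
    simp only [pow_zero, inv_one, one_pow, mul_one]
    push_cast
    rw [hm]
    push_cast
    rw [hf, he]
  -- conclude over ℝ
  rw [hc0] at hTC'
  have hre := (Complex.continuous_re.tendsto _).comp hTC'
  have heq2 : (fun n : ℕ => ((a n : ℂ) / 2 ^ n).re) = fun n : ℕ => (a n : ℝ) / 2 ^ n := by
    funext n
    have hcast : ((a n : ℂ) / 2 ^ n) = (((a n : ℝ) / 2 ^ n : ℝ) : ℂ) := by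
      push_cast
      ring
    rw [hcast, Complex.ofReal_re]
  simpa [Function.comp_def, heq2] using hre
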